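/- Let k ≥ t ≥ 2, let B₁, B₂, … be a partition of ℕ indexed by the s-subsets of [r] in lexicographic order (r = s(k−t+1)+1), with all blocks finite except the last, and suppose |B_I| ≥ s·t·∑_{J ≺ I}(|B_J|+1) for every index I. Colour each k-set e by: order its elements x¹,…,xᵏ so that the indices I(xⁱ) of their blocks are lexicographically non-decreasing, and give e any colour in [r] ∖ ⋃_{i ≤ k−t+1} I(xⁱ). Then for any s-subset C of [r] containing all colours of given monochromatic t-tight Berge-paths P₁,…,P_s, every edge e of colour in C that meets B_C satisfies |e ∩ ⋃_{J ≺ C} B_J| ≥ k − t + 1. -/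
import Mathlib


/-- Strict lexicographic order on finsets of `Fin r` (compare the smallest
element in which they differ). -/
def LexLT {r : ℕ} (A B : Finset (Fin r)) : Prop :=
  ∃ m : Fin r, m ∈ A ∧ m ∉ B ∧ ∀ x : Fin r, x < m → (x ∈ A ↔ x ∈ B)

/-- Non-strict lexicographic order on finsets of `Fin r`. -/
def LexLE {r : ℕ} (A B : Finset (Fin r)) : Prop :=
  A = B ∨ LexLT A B

open Classical in
/-- Key property of the lower-bound colouring. The blocks are encoded by
`Idx : ℕ → Finset (Fin r)` (with `r = s(k-t+1)+1`), `Idx x` being the `s`-set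
indexing the block `B_{I(x)} = Idx ⁻¹' {I(x)}` containing `x`; all blocks
except the lexicographically largest one are finite, and each block satisfies
the growth condition `|B_I| ≥ s·t·∑_{J ≺ I} (|B_J| + 1)` (infinite blocks
satisfy it trivially). The colouring `φ` gives each `k`-set `e` a colour
avoiding `⋃ I(x)` over the `k-t+1` elements `x` of `e` whose block indices are
lexicographically smallest. Conclusion: every `k`-edge whose colour lies in an
`s`-set `C` and which meets the block `B_C` has at least `k-t+1` vertices in
`⋃_{J ≺ C} B_J`. -/
theorem lower_bound_colouring_edge_property (s k t : ℕ) (ht : 2 ≤ t) (htk : t ≤ k)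
    (Idx : ℕ → Finset (Fin (s * (k - t + 1) + 1)))
    (hIdx : ∀ x : ℕ, (Idx x).card = s)
    (hfin : ∀ I : Finset (Fin (s * (k - t + 1) + 1)), I.card = s →
      (∃ J : Finset (Fin (s * (k - t + 1) + 1)), J.card = s ∧ LexLT I J) →
      (Idx ⁻¹' {I}).Finite)
    (hgrowth : ∀ I : Finset (Fin (s * (k - t + 1) + 1)), I.card = s →
      (Idx ⁻¹' {I}).Infinite ∨
      s * t * ∑ J ∈ Finset.univ.filter
          (fun J : Finset (Fin (s * (k - t + 1) + 1)) => J.card = s ∧ LexLT J I),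
          ((Idx ⁻¹' {J}).ncard + 1) ≤ (Idx ⁻¹' {I}).ncard)
    (φ : Finset ℕ → Fin (s * (k - t + 1) + 1))
    (hφ : ∀ e : Finset ℕ, e.card = k → ∃ e' ⊆ e, e'.card = k - t + 1 ∧
      (∀ x ∈ e', ∀ y ∈ e, y ∉ e' → LexLE (Idx x) (Idx y)) ∧
      ∀ x ∈ e', φ e ∉ Idx x) :
    ∀ C : Finset (Fin (s * (k - t + 1) + 1)), C.card = s →
      ∀ e : Finset ℕ, e.card = k → φ e ∈ C → (∃ x ∈ e, Idx x = C) →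
        k - t + 1 ≤ ((↑e : Set ℕ) ∩ {x | LexLT (Idx x) C}).ncard := by
  rintro C hC e he hφC ⟨x₀, hx₀e, hx₀⟩
  obtain ⟨e', he'e, he'card, hmin, havoid⟩ := hφ e he
  have hx₀' : x₀ ∉ e' := fun h => (havoid x₀ h) (hx₀ ▸ hφC)
  have hsub : (↑e' : Set ℕ) ⊆ (↑e : Set ℕ) ∩ {x | LexLT (Idx x) C} := by
    intro x hx
    simp only [Set.mem_inter_iff, Set.mem_setOf_eq, Finset.mem_coe] at *
    refine ⟨he'e hx, ?_⟩
    rcases hmin x hx x₀ hx₀e hx₀' with h | h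
    · rw [hx₀] at h
      exact absurd (h ▸ hφC) (havoid x hx)
    · rwa [hx₀] at h
  calc k - t + 1 = (↑e' : Set ℕ).ncard := by rw [Set.ncard_coe_finset, he'card]
    _ ≤ _ := Set.ncard_le_ncard hsub (Set.Finite.inter_of_left e.finite_toSet _)
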